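/- Let E, λ ∈ ℝ with 0 < λ ≤ E, and set r₋ = √(E - √(E^2 - λ^2)) and r₊ = √(E + √(E^2 - λ^2)). Then ∫_{r₋}^{r₊} √(2E - r^2 - λ^2/r^2) dr = (π/2)(E - λ). -/

import Mathlib

open Real intervalIntegral in
private lemma osc_main (E lam c : ℝ) (hlam : 0 < lam) (hcE : c < E) (hc : 0 < c)
    (hc2 : c ^ 2 = E ^ 2 - lam ^ 2) (rm rp : ℝ)
    (hrm2 : rm ^ 2 = E - c) (hrp2 : rp ^ 2 = E + c) (hrm0 : 0 < rm) (hle : rm < rp) :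
    ∫ r in rm..rp, Real.sqrt (2 * E - r ^ 2 - lam ^ 2 / r ^ 2) =
      Real.pi / 2 * (E - lam) := by
  set F : ℝ → ℝ := fun r =>
    Real.sqrt (2 * E * r ^ 2 - r ^ 4 - lam ^ 2) / 2
      + E / 2 * Real.arcsin ((r ^ 2 - E) / c)
      + lam / 2 * Real.arcsin ((lam ^ 2 - E * r ^ 2) / (c * r ^ 2)) with hF
  have hEpos : 0 < E := lt_trans hc hcE
  have key : ∫ r in rm..rp, Real.sqrt (2 * E - r ^ 2 - lam ^ 2 / r ^ 2) = F rp - F rm := by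
    apply integral_eq_sub_of_hasDerivAt_of_le hle.le
    · -- continuity of F on Icc
      have hpos : ∀ r ∈ Set.Icc rm rp, c * r ^ 2 ≠ 0 := by
        intro r hr
        have : 0 < r := lt_of_lt_of_le hrm0 hr.1
        positivity
      apply ContinuousOn.add
      apply ContinuousOn.add
      · exact ((Real.continuous_sqrt.comp (by continuity)).div_const 2).continuousOn
      · exact (Real.continuous_arcsin.comp (by continuity)).continuousOn.const_smul (E/2)
      · refine ContinuousOn.const_smul ?_ (lam/2)
        exact Real.continuous_arcsin.comp_continuousOn
          (ContinuousOn.div (by fun_prop) (by fun_prop) hpos)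
    · -- derivative on Ioo
      intro r hr
      have hr0 : 0 < r := lt_trans hrm0 hr.1
      have hrlo : E - c < r ^ 2 := by
        rw [← hrm2]; exact pow_lt_pow_left₀ hr.1 hrm0.le two_ne_zero
      have hrhi : r ^ 2 < E + c := by
        rw [← hrp2]; exact pow_lt_pow_left₀ hr.2 hr0.le two_ne_zero
      have hqpos : 0 < 2 * E * r ^ 2 - r ^ 4 - lam ^ 2 := by nlinarith
      set s : ℝ := Real.sqrt (2 * E * r ^ 2 - r ^ 4 - lam ^ 2) with hsdef
      have hs : 0 < s := Real.sqrt_pos.2 hqpos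
      have hs2 : s ^ 2 = 2 * E * r ^ 2 - r ^ 4 - lam ^ 2 := Real.sq_sqrt hqpos.le
      -- derivative of the polynomial under sqrt
      have h1 : HasDerivAt (fun x : ℝ => 2 * E * x ^ 2 - x ^ 4 - lam ^ 2)
          (4 * E * r - 4 * r ^ 3) r := by
        have h := (((hasDerivAt_pow 2 r).const_mul (2 * E)).sub (hasDerivAt_pow 4 r)).sub_const
          (lam ^ 2)
        refine h.congr_deriv ?_
        push_cast; ring
      have hA : HasDerivAt (fun x : ℝ => Real.sqrt (2 * E * x ^ 2 - x ^ 4 - lam ^ 2))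
          ((4 * E * r - 4 * r ^ 3) / (2 * s)) r := h1.sqrt hqpos.ne'
      -- first arcsin
      have hg1 : HasDerivAt (fun x : ℝ => (x ^ 2 - E) / c) (2 * r / c) r := by
        have h := ((hasDerivAt_pow 2 r).sub_const E).div_const c
        refine h.congr_deriv ?_
        push_cast; ring
      have hb1 : -1 < (r ^ 2 - E) / c := by
        rw [neg_lt, ← neg_div, div_lt_one hc]; linarith
      have hb2 : (r ^ 2 - E) / c < 1 := by rw [div_lt_one hc]; linarith
      have hB : HasDerivAt (fun x : ℝ => Real.arcsin ((x ^ 2 - E) / c))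
          (1 / Real.sqrt (1 - ((r ^ 2 - E) / c) ^ 2) * (2 * r / c)) r :=
        (Real.hasDerivAt_arcsin hb1.ne' hb2.ne).comp (h₂ := Real.arcsin) r hg1
      -- second arcsin
      have hden : HasDerivAt (fun x : ℝ => c * x ^ 2) (c * (2 * r)) r := by
        have h := (hasDerivAt_pow 2 r).const_mul c
        refine h.congr_deriv ?_; push_cast; ring
      have hnum : HasDerivAt (fun x : ℝ => lam ^ 2 - E * x ^ 2) (-(E * (2 * r))) r := by
        have h := ((hasDerivAt_pow 2 r).const_mul E).const_sub (lam ^ 2)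
        refine h.congr_deriv ?_; push_cast; ring
      have hcr : c * r ^ 2 ≠ 0 := by positivity
      have hg2 : HasDerivAt (fun x : ℝ => (lam ^ 2 - E * x ^ 2) / (c * x ^ 2))
          ((-(E * (2 * r)) * (c * r ^ 2) - (lam ^ 2 - E * r ^ 2) * (c * (2 * r))) /
            (c * r ^ 2) ^ 2) r := hnum.div hden hcr
      have hb3 : -1 < (lam ^ 2 - E * r ^ 2) / (c * r ^ 2) := by
        rw [neg_lt, ← neg_div, div_lt_one (by positivity)]; nlinarith
      have hb4 : (lam ^ 2 - E * r ^ 2) / (c * r ^ 2) < 1 := by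
        rw [div_lt_one (by positivity)]; nlinarith
      have hC : HasDerivAt (fun x : ℝ => Real.arcsin ((lam ^ 2 - E * x ^ 2) / (c * x ^ 2)))
          (1 / Real.sqrt (1 - ((lam ^ 2 - E * r ^ 2) / (c * r ^ 2)) ^ 2) *
            ((-(E * (2 * r)) * (c * r ^ 2) - (lam ^ 2 - E * r ^ 2) * (c * (2 * r))) /
              (c * r ^ 2) ^ 2)) r :=
        (Real.hasDerivAt_arcsin hb3.ne' hb4.ne).comp (h₂ := Real.arcsin) r hg2
      have hFd := ((hA.div_const 2).add (hB.const_mul (E / 2))).add (hC.const_mul (lam / 2))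
      -- simplify sqrt expressions
      have w1 : Real.sqrt (1 - ((r ^ 2 - E) / c) ^ 2) = s / c := by
        have h : 1 - ((r ^ 2 - E) / c) ^ 2 = (s / c) ^ 2 := by
          field_simp
          linear_combination hc2 - hs2
        rw [h, Real.sqrt_sq (by positivity)]
      have w2 : Real.sqrt (1 - ((lam ^ 2 - E * r ^ 2) / (c * r ^ 2)) ^ 2)
          = lam * s / (c * r ^ 2) := by
        have h : 1 - ((lam ^ 2 - E * r ^ 2) / (c * r ^ 2)) ^ 2 = (lam * s / (c * r ^ 2)) ^ 2 := by
          field_simp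
          linear_combination r ^ 4 * hc2 - lam ^ 2 * hs2
        rw [h, Real.sqrt_sq (by positivity)]
      have w3 : Real.sqrt (2 * E - r ^ 2 - lam ^ 2 / r ^ 2) = s / r := by
        have h : 2 * E - r ^ 2 - lam ^ 2 / r ^ 2 = (s / r) ^ 2 := by
          field_simp
          linear_combination -hs2
        rw [h, Real.sqrt_sq (by positivity)]
      rw [w1, w2] at hFd
      have heq : Real.sqrt (2 * E - r ^ 2 - lam ^ 2 / r ^ 2)
          = (4 * E * r - 4 * r ^ 3) / (2 * s) / 2
            + E / 2 * (1 / (s / c) * (2 * r / c))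
            + lam / 2 * (1 / (lam * s / (c * r ^ 2)) *
              ((-(E * (2 * r)) * (c * r ^ 2) - (lam ^ 2 - E * r ^ 2) * (c * (2 * r))) /
                (c * r ^ 2) ^ 2)) := by
        rw [w3]
        have hs' : s ≠ 0 := hs.ne'
        field_simp
        ring_nf
        linear_combination 4 * hs2
      rw [heq]
      exact hFd
    · -- interval integrability
      apply ContinuousOn.intervalIntegrable
      rw [Set.uIcc_of_le hle.le]
      apply Real.continuous_sqrt.comp_continuousOn
      apply ContinuousOn.sub (by fun_prop)
      exact ContinuousOn.div (by fun_prop) (by fun_prop)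
        (fun r hr => by have : 0 < r := lt_of_lt_of_le hrm0 hr.1; positivity)
  rw [key, hF]
  have hq_rp : 2 * E * rp ^ 2 - rp ^ 4 - lam ^ 2 = 0 := by
    have : rp ^ 4 = (rp ^ 2) ^ 2 := by ring
    rw [this, hrp2]; linear_combination -hc2
  have hq_rm : 2 * E * rm ^ 2 - rm ^ 4 - lam ^ 2 = 0 := by
    have : rm ^ 4 = (rm ^ 2) ^ 2 := by ring
    rw [this, hrm2]; linear_combination -hc2
  have ha1 : (rp ^ 2 - E) / c = 1 := by rw [hrp2]; field_simp; ring
  have ha2 : (rm ^ 2 - E) / c = -1 := by rw [hrm2]; field_simp; ring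
  have hrp2pos : (0:ℝ) < rp ^ 2 := by rw [hrp2]; linarith
  have hrm2pos : (0:ℝ) < rm ^ 2 := by rw [hrm2]; linarith
  have ha3 : (lam ^ 2 - E * rp ^ 2) / (c * rp ^ 2) = -1 := by
    rw [hrp2]
    rw [div_eq_iff (by positivity : c * (E + c) ≠ 0)]
    linear_combination hc2
  have ha4 : (lam ^ 2 - E * rm ^ 2) / (c * rm ^ 2) = 1 := by
    rw [hrm2]
    rw [div_eq_iff ((mul_pos hc (by linarith : (0:ℝ) < E - c)).ne')]
    linear_combination hc2
  simp only [hq_rp, hq_rm, ha1, ha2, ha3, ha4, Real.sqrt_zero, Real.arcsin_one,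
    Real.arcsin_neg_one]
  ring

/-- The leading (Langer-corrected) WKB action integral for the radial 3D harmonic
oscillator: for `0 < λ ≤ E`, with turning points `r∓ = √(E ∓ √(E² - λ²))`,
`∫_{r₋}^{r₊} √(2E - r² - λ²/r²) dr = (π/2)(E - λ)`. -/
theorem oscillator_action_integral (E lam : ℝ) (hlam : 0 < lam) (hE : lam ≤ E)
    (rm rp : ℝ)
    (hrm : rm = Real.sqrt (E - Real.sqrt (E ^ 2 - lam ^ 2)))
    (hrp : rp = Real.sqrt (E + Real.sqrt (E ^ 2 - lam ^ 2))) :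
    ∫ r in rm..rp, Real.sqrt (2 * E - r ^ 2 - lam ^ 2 / r ^ 2) =
      Real.pi / 2 * (E - lam) := by
  rcases eq_or_lt_of_le hE with heq | hlt
  · -- lam = E : degenerate case, rm = rp
    have h0 : E ^ 2 - lam ^ 2 = 0 := by rw [heq]; ring
    rw [h0, Real.sqrt_zero] at hrm hrp
    simp only [sub_zero] at hrm
    simp only [add_zero] at hrp
    rw [hrm, hrp, intervalIntegral.integral_same, heq]
    ring
  · set c : ℝ := Real.sqrt (E ^ 2 - lam ^ 2) with hcdef
    have hdpos : 0 < E ^ 2 - lam ^ 2 := by nlinarith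
    have hc : 0 < c := Real.sqrt_pos.2 hdpos
    have hc2 : c ^ 2 = E ^ 2 - lam ^ 2 := Real.sq_sqrt hdpos.le
    have hcE : c < E := by nlinarith [hc2, hc]
    have hEc : (0:ℝ) ≤ E - c := by linarith
    have hrm2 : rm ^ 2 = E - c := by rw [hrm]; exact Real.sq_sqrt hEc
    have hrp2 : rp ^ 2 = E + c := by rw [hrp]; exact Real.sq_sqrt (by linarith)
    have hrm0 : 0 < rm := by
      rw [hrm]; apply Real.sqrt_pos.2; nlinarith [hc2]
    have hle : rm < rp := by
      rw [hrm, hrp]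
      exact Real.sqrt_lt_sqrt hEc (by linarith)
    exact osc_main E lam c hlam hcE hc hc2 rm rp hrm2 hrp2 hrm0 hle
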